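/- For $0 < \alpha < 1$ and $\kappa > 0$, $\sum_{n\geq 1} \frac{(1 - e^{-2\sqrt{\kappa}})^n}{n!}\, \Gamma(\alpha + n - 1) = \frac{\Gamma(\alpha)\,(1 - e^{-2\sqrt{\kappa}(1-\alpha)})}{1 - \alpha}$. -/

import Mathlib

open Real

open Set

noncomputable def cc (α : ℝ) (n : ℕ) : ℝ := ∏ i ∈ Finset.range n, (α + i)

lemma cc_zero (α : ℝ) : cc α 0 = 1 := Finset.prod_range_zero _

lemma cc_succ (α : ℝ) (n : ℕ) : cc α (n + 1) = cc α n * (α + n) :=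
  Finset.prod_range_succ _ _

lemma cc_pos {α : ℝ} (hα : 0 < α) (n : ℕ) : 0 < cc α n :=
  Finset.prod_pos fun i _ => by positivity

lemma cc_le_factorial {α : ℝ} (hα0 : 0 < α) (hα : α ≤ 1) (n : ℕ) :
    cc α n ≤ n.factorial := by
  induction n with
  | zero => simp [cc_zero]
  | succ n ih =>
    rw [cc_succ, Nat.factorial_succ]
    push_cast
    have h1 : α + n ≤ n + 1 := by linarith
    have h2 : (0:ℝ) ≤ α + n := by positivity
    calc cc α n * (α + n) ≤ (n.factorial : ℝ) * (n + 1) := by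
          apply mul_le_mul ih h1 h2 (by positivity)
      _ = (n + 1) * n.factorial := by ring

lemma binom_aux {α : ℝ} (hα0 : 0 < α) (hα1 : α < 1) {x : ℝ} (hx0 : 0 ≤ x) (hx1 : x < 1) :
    ∑' n : ℕ, cc α n * x ^ (n + 1) / (n + 1).factorial
      = (1 - (1 - x) ^ (1 - α)) / (1 - α) := by
  set b : ℝ := (1 + x) / 2 with hb
  have hb0 : 0 < b := by positivity
  have hb1 : b < 1 := by simp only [hb]; linarith
  have hxb : x < b := by simp only [hb]; linarith
  set t : Set ℝ := Ioo (-b) b with ht_def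
  have ht : IsOpen t := isOpen_Ioo
  have htc : IsPreconnected t := isPreconnected_Ioo
  have h0t : (0:ℝ) ∈ t := ⟨by linarith, hb0⟩
  have hsub : Icc (0:ℝ) x ⊆ t := fun z hz => ⟨by simp at hz ⊢; linarith [hz.1], by
    simp only [ht_def, mem_Ioo] at *; linarith [hz.2]⟩
  have h1y : ∀ y ∈ t, 0 < 1 - y := fun y hy => by
    have := hy.2; linarith
  -- the series
  set f : ℕ → ℝ → ℝ := fun n y => cc α n * y ^ (n + 1) / (n + 1).factorial with hf_def
  set g : ℕ → ℝ → ℝ := fun n y => cc α n * y ^ n / n.factorial with hg_def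
  set g' : ℕ → ℝ → ℝ := fun n y => cc α n * (n * y ^ (n - 1)) / n.factorial with hg'_def
  -- derivatives
  have hgderiv : ∀ (n : ℕ) (y : ℝ), HasDerivAt (g n) (g' n y) y := fun n y =>
    ((hasDerivAt_pow n y).const_mul (cc α n)).div_const _
  have hfderiv : ∀ (n : ℕ) (y : ℝ), HasDerivAt (f n) (g n y) y := by
    intro n y
    have h := ((hasDerivAt_pow (n + 1) y).const_mul (cc α n)).div_const
      ((n + 1).factorial : ℝ)
    convert h using 1
    · rfl
    · rfl
    have hn : ((n:ℝ) + 1) ≠ 0 := by positivity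
    simp only [Nat.add_sub_cancel, Nat.factorial_succ, Nat.cast_mul, Nat.cast_add,
      Nat.cast_one]
    rw [mul_div_assoc, mul_div_mul_left _ _ hn, ← mul_div_assoc]
  -- summable bounds
  have hu : Summable (fun n : ℕ => b ^ n) := summable_geometric_of_lt_one hb0.le hb1
  have hu' : Summable (fun n : ℕ => (n:ℝ) * b ^ (n - 1)) := by
    rw [← summable_nat_add_iff 1]
    simp only [Nat.add_sub_cancel]
    have h1 : Summable (fun n : ℕ => (n:ℝ) * b ^ n) := by
      have := summable_pow_mul_geometric_of_norm_lt_one (R := ℝ) 1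
        (r := b) (by rw [Real.norm_eq_abs, abs_of_pos hb0]; exact hb1)
      simpa using this
    exact (h1.add hu).congr (fun n => by push_cast; ring)
  have hmemb : ∀ y ∈ t, |y| ≤ b := fun y hy => by
    rw [abs_le]; exact ⟨hy.1.le, hy.2.le⟩
  have hgbound : ∀ (n : ℕ), ∀ y ∈ t, ‖g n y‖ ≤ b ^ n := by
    intro n y hy
    have hcc := cc_pos hα0 n
    have hccf := cc_le_factorial hα0 hα1.le n
    have hfacpos : (0:ℝ) < n.factorial := by positivity
    rw [hg_def]
    simp only [Real.norm_eq_abs, abs_div, abs_mul, abs_pow, abs_of_pos hcc,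
      abs_of_pos hfacpos]
    rw [div_le_iff₀ hfacpos]
    calc cc α n * |y| ^ n ≤ (n.factorial : ℝ) * b ^ n := by
          apply mul_le_mul hccf (pow_le_pow_left₀ (abs_nonneg y) (hmemb y hy) n)
            (by positivity) (by positivity)
      _ = b ^ n * n.factorial := by ring
  have hg'bound : ∀ (n : ℕ), ∀ y ∈ t, ‖g' n y‖ ≤ (n:ℝ) * b ^ (n - 1) := by
    intro n y hy
    have hcc := cc_pos hα0 n
    have hccf := cc_le_factorial hα0 hα1.le n
    have hfacpos : (0:ℝ) < n.factorial := by positivity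
    rw [hg'_def]
    simp only [Real.norm_eq_abs, abs_div, abs_mul, abs_of_pos hcc, abs_of_pos hfacpos,
      Nat.abs_cast, abs_pow]
    rw [div_le_iff₀ hfacpos]
    calc cc α n * ((n:ℝ) * |y| ^ (n - 1)) ≤ (n.factorial : ℝ) * ((n:ℝ) * b ^ (n - 1)) := by
          apply mul_le_mul hccf ?_ (by positivity) (by positivity)
          apply mul_le_mul_of_nonneg_left
            (pow_le_pow_left₀ (abs_nonneg y) (hmemb y hy) _) (by positivity)
      _ = (n:ℝ) * b ^ (n - 1) * n.factorial := by ring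
  -- summability at each point of t
  have hSsum : ∀ y ∈ t, Summable (fun n => g n y) := fun y hy =>
    Summable.of_norm_bounded hu (fun n => hgbound n y hy)
  have hS'sum : ∀ y ∈ t, Summable (fun n => g' n y) := fun y hy =>
    Summable.of_norm_bounded hu' (fun n => hg'bound n y hy)
  have hg00 : Summable (fun n => g n 0) := hSsum 0 h0t
  have hf00 : Summable (fun n => f n 0) := by
    apply summable_zero.congr
    intro n
    simp [hf_def]
  set S : ℝ → ℝ := fun y => ∑' n, g n y with hS_def
  have hSderiv : ∀ y ∈ t, HasDerivAt S (∑' n, g' n y) y := fun y hy =>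
    hasDerivAt_tsum_of_isPreconnected hu' ht htc (fun n z _ => hgderiv n z)
      (fun n z hz => hg'bound n z hz) h0t hg00 hy
  have hFderiv : ∀ y ∈ t, HasDerivAt (fun z => ∑' n, f n z) (S y) y := fun y hy =>
    hasDerivAt_tsum_of_isPreconnected hu ht htc (fun n z _ => hfderiv n z)
      (fun n z hz => hgbound n z hz) h0t hf00 hy
  -- the ODE
  have hODE : ∀ y ∈ t, (1 - y) * (∑' n, g' n y) = α * S y := by
    intro y hy
    have hT : Summable (fun n => g' n y) := hS'sum y hy
    have hshift : ∑' n, g' n y = ∑' n, (α + n) * g n y := by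
      rw [hT.tsum_eq_zero_add]
      have h0 : g' 0 y = 0 := by simp [hg'_def]
      rw [h0, zero_add]
      apply tsum_congr
      intro n
      show cc α (n + 1) * (((n:ℕ)+1 : ℕ) * y ^ ((n + 1) - 1)) / ((n+1).factorial : ℝ)
        = (α + n) * (cc α n * y ^ n / n.factorial)
      rw [cc_succ, Nat.factorial_succ]
      have hn : ((n:ℝ) + 1) ≠ 0 := by positivity
      have hfac : ((n.factorial : ℝ)) ≠ 0 := by positivity
      simp only [Nat.add_sub_cancel, Nat.cast_mul, Nat.cast_add, Nat.cast_one]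
      field_simp
    have hpt : ∀ n : ℕ, (α + n) * g n y = α * g n y + y * g' n y := by
      intro n
      cases n with
      | zero => simp [hg'_def, hg_def]
      | succ m =>
        show (α + ((m:ℕ)+1 : ℕ)) * (cc α (m+1) * y ^ (m+1) / ((m+1).factorial : ℝ))
          = α * (cc α (m+1) * y ^ (m+1) / ((m+1).factorial : ℝ))
            + y * (cc α (m+1) * (((m:ℕ)+1 : ℕ) * y ^ ((m+1) - 1)) / ((m+1).factorial : ℝ))
        have hfac : (((m+1).factorial : ℝ)) ≠ 0 := by positivity
        simp only [Nat.add_sub_cancel, Nat.cast_add, Nat.cast_one]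
        have hyy : y * y ^ m = y ^ (m + 1) := by rw [pow_succ]; ring
        field_simp
        ring
    have hsplit : ∑' n, (α + n) * g n y = α * S y + y * (∑' n, g' n y) := by
      calc ∑' n, (α + n) * g n y = ∑' n, (α * g n y + y * g' n y) := tsum_congr hpt
        _ = α * S y + y * (∑' n, g' n y) := by
            rw [Summable.tsum_add ((hSsum y hy).mul_left α) (hT.mul_left y),
              tsum_mul_left, tsum_mul_left]
    have hTy : (∑' n, g' n y) = α * S y + y * (∑' n, g' n y) := hshift.trans hsplit
    linarith
  -- φ = (1-y)^α * S y has zero derivative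
  have hφderiv : ∀ y ∈ t, HasDerivAt (fun z => (1 - z) ^ α * S z) 0 y := by
    intro y hy
    have h1 := h1y y hy
    have hr : HasDerivAt (fun z : ℝ => (1 - z) ^ α) (-1 * α * (1 - y) ^ (α - 1)) y :=
      ((hasDerivAt_id y).const_sub 1).rpow_const (Or.inl h1.ne')
    have hprod := hr.mul (hSderiv y hy)
    convert hprod using 1
    · rfl
    · rfl
    · rfl
    have hT := hODE y hy
    have hab : (1 - y) ^ α = (1 - y) ^ (α - 1) * (1 - y) := by
      rw [← Real.rpow_add_one h1.ne' (α - 1)]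
      ring_nf
    rw [hab]
    linear_combination (-(1 - y) ^ (α - 1)) * hT
  -- φ is constant, hence S y = (1-y)^(-α)
  have hS0 : S 0 = 1 := by
    show (∑' n : ℕ, g n 0) = 1
    rw [tsum_eq_single 0 (fun n hn => by simp [hg_def, zero_pow hn])]
    simp [hg_def, cc_zero]
  have hφconst : ∀ y ∈ Icc 0 x, (1 - y) ^ α * S y = 1 := by
    intro y hy
    have := eq_of_has_deriv_right_eq (f' := fun _ : ℝ => (0:ℝ))
      (f := fun z => (1 - z) ^ α * S z) (g := fun _ => (1:ℝ)) (a := 0) (b := x)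
      (fun z hz => (hφderiv z (hsub ⟨hz.1, hz.2.le⟩)).hasDerivWithinAt)
      (fun z _ => (hasDerivAt_const z 1).hasDerivWithinAt)
      (fun z hz => (hφderiv z (hsub hz)).continuousAt.continuousWithinAt)
      continuousOn_const
      (by simp [hS0])
    exact this y hy
  have hSval : ∀ y ∈ Icc 0 x, S y = (1 - y) ^ (-α) := by
    intro y hy
    have h1 : 0 < 1 - y := h1y y (hsub hy)
    rw [Real.rpow_neg h1.le]
    exact (inv_eq_of_mul_eq_one_right (hφconst y hy)).symm
  -- derivative of the RHS
  have hGderiv : ∀ y ∈ t, HasDerivAt (fun z => (1 - (1 - z) ^ (1 - α)) / (1 - α))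
      ((1 - y) ^ (-α)) y := by
    intro y hy
    have h1 := h1y y hy
    have hr : HasDerivAt (fun z : ℝ => (1 - z) ^ (1 - α)) (-1 * (1 - α) * (1 - y) ^ (1 - α - 1)) y :=
      ((hasDerivAt_id y).const_sub 1).rpow_const (Or.inl h1.ne')
    have h := (hr.const_sub 1).div_const (1 - α)
    convert h using 1
    · rfl
    · rfl
    rw [show (1:ℝ) - α - 1 = -α by ring]
    have hα' : (1:ℝ) - α ≠ 0 := by linarith
    field_simp
  -- final comparison
  have hfinal := eq_of_has_deriv_right_eq (f' := fun y : ℝ => (1 - y) ^ (-α))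
    (f := fun z => ∑' n, f n z) (g := fun z => (1 - (1 - z) ^ (1 - α)) / (1 - α))
    (a := 0) (b := x)
    (fun z hz => by
      have h := hFderiv z (hsub ⟨hz.1, hz.2.le⟩)
      rw [hSval z ⟨hz.1, hz.2.le⟩] at h
      exact h.hasDerivWithinAt)
    (fun z hz => (hGderiv z (hsub ⟨hz.1, hz.2.le⟩)).hasDerivWithinAt)
    (fun z hz => (hFderiv z (hsub hz)).continuousAt.continuousWithinAt)
    (fun z hz => (hGderiv z (hsub hz)).continuousAt.continuousWithinAt)
    (by
      have hF0 : (∑' n, f n 0) = 0 := by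
        rw [tsum_congr (fun n => show f n 0 = 0 by simp [hf_def])]
        exact tsum_zero
      simp [hF0, Real.one_rpow])
  exact hfinal x ⟨hx0, le_refl x⟩

lemma Gamma_cc {α : ℝ} (hα : 0 < α) (n : ℕ) :
    Real.Gamma (α + n) = Real.Gamma α * cc α n := by
  induction n with
  | zero => simp [cc_zero]
  | succ n ih =>
    have h : α + ((n : ℕ) + 1 : ℕ) = (α + n) + 1 := by push_cast; ring
    rw [h, Real.Gamma_add_one (by positivity), ih, cc_succ]
    ring

/-- For `0 < α < 1` and `κ > 0`:
`∑_{n ≥ 1} (1-e^{-2√κ})^n Γ(α+n-1)/n! = Γ(α)(1-e^{-2√κ(1-α)})/(1-α)`. -/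
theorem tsum_gamma_series (α κ : ℝ) (hα0 : 0 < α) (hα1 : α < 1) (hκ : 0 < κ) :
    ∑' n : ℕ,
        (1 - Real.exp (-2 * Real.sqrt κ)) ^ (n + 1) / (Nat.factorial (n + 1)) *
          Real.Gamma (α + ((n : ℝ) + 1) - 1)
      = Real.Gamma α * (1 - Real.exp (-2 * Real.sqrt κ * (1 - α))) / (1 - α) := by
  set x : ℝ := 1 - Real.exp (-2 * Real.sqrt κ) with hx_def
  have hsq : 0 < Real.sqrt κ := Real.sqrt_pos.mpr hκ
  have hexp1 : Real.exp (-2 * Real.sqrt κ) < 1 := by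
    rw [Real.exp_lt_one_iff]; nlinarith
  have hx0 : 0 ≤ x := by simp only [hx_def]; linarith
  have hx1 : x < 1 := by
    have := Real.exp_pos (-2 * Real.sqrt κ)
    simp only [hx_def]; linarith
  have hterm : ∀ n : ℕ,
      x ^ (n + 1) / ((n + 1).factorial : ℝ) * Real.Gamma (α + ((n : ℝ) + 1) - 1)
        = Real.Gamma α * (cc α n * x ^ (n + 1) / (n + 1).factorial) := by
    intro n
    have h1 : α + ((n : ℝ) + 1) - 1 = α + (n : ℕ) := by push_cast; ring
    rw [h1, Gamma_cc hα0]
    ring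
  rw [tsum_congr hterm, tsum_mul_left, binom_aux hα0 hα1 hx0 hx1]
  have h1x : (1 : ℝ) - x = Real.exp (-2 * Real.sqrt κ) := by simp [hx_def]
  rw [h1x]
  have hrpow : Real.exp (-2 * Real.sqrt κ) ^ ((1:ℝ) - α)
      = Real.exp (-2 * Real.sqrt κ * (1 - α)) := by
    rw [← Real.exp_mul]
  rw [hrpow]
  ring
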